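/- There exist a constant C > 0 and p₀ > 1 such that for all p ≥ p₀ the derivative of u_p is uniformly bounded: sup_{t ∈ [-1,1]} |u_p'(t)| ≤ C. -/

import Mathlib

open Real Set Filter Topology

noncomputable section

/-- `u` is the (unique) positive solution of the one-dimensional Lane–Emden problem
`-u'' = u^p` on `(-1,1)` with `u(-1) = u(1) = 0`; it is even, positive on `(-1,1)`,
decreasing on `[0,1]`, and its sup norm is attained at `0`. -/
def IsLaneEmden (p : ℝ) (u : ℝ → ℝ) : Prop :=
  ContDiff ℝ 2 u ∧
  (∀ t ∈ Ioo (-1 : ℝ) 1, deriv (deriv u) t = -(u t ^ p)) ∧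
  u (-1) = 0 ∧ u 1 = 0 ∧
  (∀ t ∈ Ioo (-1 : ℝ) 1, 0 < u t) ∧
  (∀ t : ℝ, u (-t) = u t) ∧
  (∀ ⦃s t : ℝ⦄, s ∈ Icc (0 : ℝ) 1 → t ∈ Icc (0 : ℝ) 1 → s ≤ t → u t ≤ u s) ∧
  (∀ t ∈ Icc (-1 : ℝ) 1, u t ≤ u 0)

lemma laneEmden_deriv_bound (p : ℝ) (hp : (8:ℝ) ≤ p) (v : ℝ → ℝ) (h : IsLaneEmden p v) :
    ∀ t ∈ Icc (-1:ℝ) 1, |deriv v t| ≤ 8 := by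
  obtain ⟨hC2, hode, hm1, h1, hpos, heven, hdec, hmax⟩ := h
  have hp1 : (1:ℝ) < p := by linarith
  have hp0 : (0:ℝ) ≤ p := by linarith
  have hp1' : (0:ℝ) < p + 1 := by linarith
  have hp2' : (0:ℝ) < p + 2 := by linarith
  have hdiff : Differentiable ℝ v := hC2.differentiable (by norm_num)
  have hC1' : ContDiff ℝ 1 (deriv v) :=
    ((contDiff_succ_iff_deriv (n := 1)).1 (by exact_mod_cast hC2)).2.2
  have hdiff' : Differentiable ℝ (deriv v) := hC1'.differentiable (by norm_num)
  have hcont' : Continuous (deriv v) := hdiff'.continuous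
  set M := v 0 with hMdef
  have hM : 0 < M := hpos 0 (by norm_num)
  have hnn : ∀ t ∈ Icc (-1:ℝ) 1, 0 ≤ v t := by
    intro t ht
    rcases eq_or_lt_of_le ht.1 with hh | hh
    · rw [← hh, hm1]
    · rcases eq_or_lt_of_le ht.2 with hh2 | hh2
      · rw [hh2, h1]
      · exact (hpos t ⟨hh, hh2⟩).le
  have hodd : ∀ t : ℝ, deriv v (-t) = -deriv v t := by
    intro t
    have hvc : (fun s => v (-s)) = v := funext heven
    have := deriv_comp_neg (f := v) (x := t)
    rw [hvc] at this
    linarith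
  have hd0 : deriv v 0 = 0 := by
    have := hodd 0
    rw [neg_zero] at this
    linarith
  -- concavity
  have hconc : ConcaveOn ℝ (Icc (-1:ℝ) 1) v := by
    apply concaveOn_of_deriv2_nonpos (convex_Icc _ _) hdiff.continuous.continuousOn
      hdiff.differentiableOn hdiff'.differentiableOn
    intro x hx
    rw [interior_Icc] at hx
    have hx2 : deriv^[2] v x = deriv (deriv v) x := by
      simp [Function.iterate_succ, Function.iterate_zero]
    rw [hx2, hode x hx]
    have : 0 ≤ v x ^ p := Real.rpow_nonneg (hpos x hx).le p
    linarith
  have hlow : ∀ t ∈ Icc (0:ℝ) 1, M * (1 - t) ≤ v t := by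
    intro t ht
    have h0m : (0:ℝ) ∈ Icc (-1:ℝ) 1 := by norm_num
    have h1m : (1:ℝ) ∈ Icc (-1:ℝ) 1 := by norm_num
    have h2 := hconc.2 h0m h1m (sub_nonneg.2 ht.2) ht.1 (by ring)
    simp only [smul_eq_mul, mul_zero, mul_one, zero_add, h1, add_zero] at h2
    nlinarith [h2]
  -- Step B
  have hB : ∀ s ∈ Icc (0:ℝ) 1, deriv v s + M ^ p / (p+1) * (1 - (1-s) ^ (p+1)) ≤ 0 := by
    have hder_w : ∀ x ∈ Ioo (0:ℝ) 1,
        HasDerivAt (fun s : ℝ => (1 - s) ^ (p+1)) (-((p+1) * (1-x) ^ p)) x := by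
      intro x hx
      have h1x : (1:ℝ) - x ≠ 0 := by have := hx.2; intro hc; linarith [sub_eq_zero.1 hc]
      have hout : HasDerivAt (fun y : ℝ => y ^ (p+1)) ((p+1) * (1-x) ^ (p+1-1)) (1-x) :=
        Real.hasDerivAt_rpow_const (Or.inl h1x)
      have hin : HasDerivAt (fun s : ℝ => 1 - s) (-1) x := by
        simpa using (hasDerivAt_id x).const_sub 1
      have hcomp := hout.comp x hin
      have e : -((p+1) * (1-x) ^ p) = ((p+1) * (1-x) ^ (p+1-1)) * (-1) := by
        rw [show p + 1 - 1 = p by ring]; ring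
      exact e ▸ hcomp
    set g : ℝ → ℝ := fun s => deriv v s + M ^ p / (p+1) * (1 - (1-s) ^ (p+1)) with hgdef
    have hg : ∀ x ∈ Ioo (0:ℝ) 1,
        HasDerivAt g (deriv (deriv v) x + M ^ p / (p+1) * ((p+1) * (1-x) ^ p)) x := by
      intro x hx
      have h2 : HasDerivAt (fun s : ℝ => 1 - (1-s) ^ (p+1)) ((p+1) * (1-x) ^ p) x := by
        have := (hder_w x hx).const_sub 1
        simpa using this
      exact ((hdiff' x).hasDerivAt).add (h2.const_mul (M ^ p / (p+1)))
    have hanti : AntitoneOn g (Icc (0:ℝ) 1) := by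
      apply antitoneOn_of_deriv_nonpos (convex_Icc _ _)
      · apply Continuous.continuousOn
        apply hcont'.add
        exact continuous_const.mul (continuous_const.sub
          ((continuous_const.sub continuous_id).rpow_const (fun x => Or.inr (by linarith))))
      · rw [interior_Icc]
        exact fun x hx => ((hg x hx).differentiableAt).differentiableWithinAt
      · rw [interior_Icc]
        intro x hx
        rw [(hg x hx).deriv]
        have hx' : x ∈ Ioo (-1:ℝ) 1 := ⟨by linarith [hx.1], hx.2⟩
        rw [hode x hx']
        have h1x : (0:ℝ) ≤ 1 - x := by linarith [hx.2]
        have hmono : (M * (1-x)) ^ p ≤ v x ^ p :=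
          Real.rpow_le_rpow (by positivity) (hlow x ⟨hx.1.le, hx.2.le⟩) hp0
        rw [Real.mul_rpow hM.le h1x] at hmono
        have : M ^ p / (p+1) * ((p+1) * (1-x) ^ p) = M ^ p * (1-x) ^ p := by
          field_simp
        rw [this]
        linarith
    intro s hs
    have := hanti (left_mem_Icc.2 (by norm_num)) hs hs.1
    have hg0 : g 0 = 0 := by
      simp [hgdef, hd0, Real.one_rpow]
    rw [hg0] at this
    exact this
  -- Step C : M^p ≤ (p+2) * M
  have hMp : M ^ p ≤ (p+2) * M := by
    set G : ℝ → ℝ := fun s => v s + M ^ p / (p+1) * (s - (1 - (1-s) ^ (p+2)) / (p+2)) with hGdef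
    have hG : ∀ x ∈ Ioo (0:ℝ) 1,
        HasDerivAt G (deriv v x + M ^ p / (p+1) * (1 - (1-x) ^ (p+1))) x := by
      intro x hx
      have h1x : (1:ℝ) - x ≠ 0 := by have := hx.2; intro hc; linarith [sub_eq_zero.1 hc]
      have hout : HasDerivAt (fun y : ℝ => y ^ (p+2)) ((p+2) * (1-x) ^ (p+2-1)) (1-x) :=
        Real.hasDerivAt_rpow_const (Or.inl h1x)
      have hin : HasDerivAt (fun s : ℝ => 1 - s) (-1) x := by
        simpa using (hasDerivAt_id x).const_sub 1
      have hcomp := hout.comp x hin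
      have h2 : HasDerivAt (fun s : ℝ => s - (1 - (1-s) ^ (p+2)) / (p+2))
          (1 - (1-x) ^ (p+1)) x := by
        have h3 := ((hcomp.const_sub 1).div_const (p+2))
        have h4 := (hasDerivAt_id x).sub h3
        have e : 1 - (1-x) ^ (p+1) = 1 - -((p+2) * (1-x) ^ (p+2-1) * -1) / (p+2) := by
          rw [show p + 2 - 1 = p + 1 by ring]
          field_simp
        exact e ▸ h4
      exact ((hdiff x).hasDerivAt).add (h2.const_mul (M ^ p / (p+1)))
    have hanti : AntitoneOn G (Icc (0:ℝ) 1) := by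
      apply antitoneOn_of_deriv_nonpos (convex_Icc _ _)
      · apply Continuous.continuousOn
        apply hdiff.continuous.add
        apply continuous_const.mul
        apply continuous_id.sub
        apply Continuous.div_const
        exact continuous_const.sub ((continuous_const.sub continuous_id).rpow_const
          (fun x => Or.inr (by linarith)))
      · rw [interior_Icc]
        exact fun x hx => ((hG x hx).differentiableAt).differentiableWithinAt
      · rw [interior_Icc]
        intro x hx
        rw [(hG x hx).deriv]
        exact hB x ⟨hx.1.le, hx.2.le⟩
    have hG10 := hanti (left_mem_Icc.2 (by norm_num)) (right_mem_Icc.2 (by norm_num)) (by norm_num)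
    have hG0 : G 0 = M := by
      simp [hGdef, Real.one_rpow, hMdef]
    have hG1 : G 1 = M ^ p / (p+1) * (1 - 1 / (p+2)) := by
      simp [hGdef, h1, Real.zero_rpow (by positivity : p + 2 ≠ 0)]
    rw [hG0, hG1] at hG10
    have hMpnn : (0:ℝ) ≤ M ^ p := Real.rpow_nonneg hM.le p
    have key : M ^ p / (p+2) ≤ M := by
      have e : M ^ p / (p+1) * (1 - 1 / (p+2)) = M ^ p / (p+2) := by
        field_simp; ring
      linarith [e ▸ hG10]
    rw [div_le_iff₀ hp2'] at key
    linarith [key]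
  -- M ≤ 4
  have hMp1 : M ^ (p-1) ≤ p + 2 := by
    have e : M ^ p = M ^ (p-1) * M := by
      conv_lhs => rw [show p = p - 1 + 1 by ring]
      rw [Real.rpow_add_one hM.ne']
    rw [e] at hMp
    exact le_of_mul_le_mul_right hMp hM
  have h4 : p + 2 ≤ (4:ℝ) ^ (p-1) := by
    have l2 : (0.6931471803:ℝ) < Real.log 2 := Real.log_two_gt_d9
    have l4 : Real.log 4 = 2 * Real.log 2 := by
      rw [show (4:ℝ) = 2 ^ (2:ℕ) by norm_num, Real.log_pow]; push_cast; ring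
    have e : (4:ℝ) ^ (p-1) = Real.exp (Real.log 4 * (p-1)) :=
      Real.rpow_def_of_pos (by norm_num) _
    have hexp : Real.log 4 * (p-1) + 1 ≤ Real.exp (Real.log 4 * (p-1)) :=
      Real.add_one_le_exp _
    rw [e]
    nlinarith [hexp, l4, l2, hp]
  have hM4 : M ≤ 4 := by
    by_contra hc
    push_neg at hc
    have := Real.rpow_lt_rpow (by norm_num : (0:ℝ) ≤ 4) hc (by linarith : (0:ℝ) < p - 1)
    linarith
  -- Energy
  set E : ℝ → ℝ := fun t => (deriv v t) ^ 2 / 2 + (v t) ^ (p+1) / (p+1) with hEdef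
  have hEconst : ∀ t ∈ Icc (0:ℝ) 1, E t = E 0 := by
    apply constant_of_has_deriv_right_zero
    · apply Continuous.continuousOn
      exact ((hcont'.pow 2).div_const 2).add
        ((hdiff.continuous.rpow_const (fun x => Or.inr (by linarith))).div_const (p+1))
    · intro x hx
      have hx' : x ∈ Ioo (-1:ℝ) 1 := ⟨by linarith [hx.1], hx.2⟩
      have hd1 : HasDerivAt (fun t => (deriv v t) ^ 2 / 2) (deriv v x * deriv (deriv v) x) x := by
        have h0 := (((hdiff' x).hasDerivAt).pow 2).div_const 2
        have e : deriv v x * deriv (deriv v) x = (↑2 * deriv v x ^ (2-1) * deriv (deriv v) x) / 2 := by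
          norm_num; ring
        exact e ▸ h0
      have hd2 : HasDerivAt (fun t => (v t) ^ (p+1) / (p+1)) ((v x) ^ p * deriv v x) x := by
        have hout : HasDerivAt (fun y : ℝ => y ^ (p+1)) ((p+1) * v x ^ (p+1-1)) (v x) :=
          Real.hasDerivAt_rpow_const (Or.inr (by linarith))
        have h0 := (hout.comp x (hdiff x).hasDerivAt).div_const (p+1)
        have e : (v x) ^ p * deriv v x = ((p+1) * v x ^ (p+1-1)) * deriv v x / (p+1) := by
          rw [show p + 1 - 1 = p by ring]; field_simp
        exact e ▸ h0
      have hsum := hd1.add hd2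
      have e0 : deriv v x * deriv (deriv v) x + (v x) ^ p * deriv v x = 0 := by
        rw [hode x hx']; ring
      rw [e0] at hsum
      exact hsum.hasDerivWithinAt
  have hE0 : E 0 = M ^ (p+1) / (p+1) := by
    simp [hEdef, hd0, hMdef]
  have hMP : M ^ (p+1) ≤ 16 * (p+2) := by
    have e : M ^ (p+1) = M ^ (p-1) * M * M := by
      rw [show p + 1 = p - 1 + 1 + 1 by ring, Real.rpow_add_one hM.ne', Real.rpow_add_one hM.ne']
    rw [e]
    have hMpnn : (0:ℝ) ≤ M ^ (p-1) := Real.rpow_nonneg hM.le _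
    have hMM : M * M ≤ 16 := by nlinarith [hM4, hM.le]
    calc M ^ (p-1) * M * M = M ^ (p-1) * (M * M) := by ring
      _ ≤ (p+2) * 16 := mul_le_mul hMp1 hMM (by nlinarith [hM.le]) (by linarith)
      _ = 16 * (p+2) := by ring
  have hEbound : ∀ t ∈ Icc (0:ℝ) 1, |deriv v t| ≤ 8 := by
    intro t ht
    have h1' := hEconst t ht
    rw [hE0] at h1'
    have h2 : 0 ≤ (v t) ^ (p+1) := Real.rpow_nonneg (hnn t ⟨by linarith [ht.1], ht.2⟩) _
    have hEt : (deriv v t) ^ 2 / 2 + (v t) ^ (p+1) / (p+1) = M ^ (p+1) / (p+1) := h1'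
    have hsq : (deriv v t) ^ 2 ≤ 64 := by
      have hb : (deriv v t) ^ 2 / 2 ≤ M ^ (p+1) / (p+1) := by
        have : 0 ≤ (v t) ^ (p+1) / (p+1) := by positivity
        linarith
      have hb2 : M ^ (p+1) / (p+1) ≤ 32 := by
        rw [div_le_iff₀ hp1']
        nlinarith [hMP]
      linarith
    nlinarith [sq_nonneg (|deriv v t| - 8), sq_abs (deriv v t), abs_nonneg (deriv v t)]
  intro t ht
  rcases le_or_gt 0 t with h0 | h0
  · exact hEbound t ⟨h0, ht.2⟩
  · have hmem : -t ∈ Icc (0:ℝ) 1 := ⟨by linarith, by linarith [ht.1]⟩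
    have h8 := hEbound (-t) hmem
    rw [hodd t, abs_neg] at h8
    exact h8

/-- Uniform bound on `|u_p'|` on `[-1,1]` for all large `p`. -/
theorem deriv_uniformly_bounded
    (u : ℝ → ℝ → ℝ) (hu : ∀ p : ℝ, 1 < p → IsLaneEmden p (u p)) :
    ∃ C > (0 : ℝ), ∃ p₀ > (1 : ℝ), ∀ p ≥ p₀, ∀ t ∈ Icc (-1 : ℝ) 1,
      |deriv (u p) t| ≤ C := by
  refine ⟨8, by norm_num, 8, by norm_num, fun p hp t ht => ?_⟩
  exact laneEmden_deriv_bound p hp (u p) (hu p (by linarith)) t ht
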